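/- Let α ∈ (1,2) and β ∈ (0,1) with α + β ∈ (2,3), let X be a real Banach space, and let u : ℝ → X be a bounded, twice continuously differentiable function with bounded first and second derivatives such that the Hölder seminorm [D²u]_{α+β−2} := sup_{x≠y} ‖D²u(x) − D²u(y)‖/|x−y|^{α+β−2} is finite. Then for every x ∈ ℝ the Bochner integral (−Δ)^{α/2}u(x) := C_α ∫_ℝ ( u(x) − u(y) − Du(x)·(x−y) ) / |x−y|^{1+α} dy converges absolutely, and there exists a constant C = C(α,β) > 0, independent of X and u, such that sup_x ‖(−Δ)^{α/2}u(x)‖ + sup_{x≠y} ‖(−Δ)^{α/2}u(x) − (−Δ)^{α/2}u(y)‖/|x−y|^β ≤ C ‖u‖_{α+β}, where ‖u‖_{α+β} := sup_x ‖u(x)‖ + sup_x ‖Du(x)‖ + sup_x ‖D²u(x)‖ + [u]_β + [Du]_β + [D²u]_{α+β−2} with [φ]_β := sup_{x≠y} ‖φ(x) − φ(y)‖/|x−y|^β. -/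

import Mathlib

open MeasureTheory

/-- The normalizing constant `C_α = 2^α Γ((1+α)/2) / (π^{1/2} Γ(−α/2))`. -/
noncomputable def Calpha (α : ℝ) : ℝ :=
  2 ^ α * Real.Gamma ((1 + α) / 2) / (Real.sqrt Real.pi * Real.Gamma (-(α / 2)))

/-- Sup norm `sup_x ‖φ(x)‖` of a Banach-space-valued function. -/
noncomputable def supNorm {X : Type*} [NormedAddCommGroup X] (φ : ℝ → X) : ℝ :=
  ⨆ x : ℝ, ‖φ x‖

/-- The `β`-Hölder seminorm `[φ]_β = sup_{x≠y} ‖φ(x) − φ(y)‖ / |x−y|^β`. -/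
noncomputable def holderSemi {X : Type*} [NormedAddCommGroup X] (β : ℝ) (φ : ℝ → X) : ℝ :=
  ⨆ p : {q : ℝ × ℝ // q.1 ≠ q.2}, ‖φ p.val.1 - φ p.val.2‖ / |p.val.1 - p.val.2| ^ β

/-- The fractional Laplacian (pointwise/Bochner form)
`(−Δ)^{α/2}u(x) = C_α ∫_ℝ (u(x) − u(y) − Du(x)·(x−y)) / |x−y|^{1+α} dy`. -/
noncomputable def fracLap (α : ℝ) {X : Type*} [NormedAddCommGroup X] [NormedSpace ℝ X]
    (u : ℝ → X) (x : ℝ) : X :=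
  Calpha α • ∫ y : ℝ, (|x - y| ^ (1 + α))⁻¹ • (u x - u y - (x - y) • deriv u x)

open Set



section helperLemmas

variable {X : Type*} [NormedAddCommGroup X] [NormedSpace ℝ X]

/-- Mean value inequality on an unordered interval. -/
lemma mvt_abs {f f' : ℝ → X} (hf : ∀ w, HasDerivAt f (f' w) w) {a b C : ℝ}
    (hC : ∀ w ∈ Set.uIcc a b, ‖f' w‖ ≤ C) : ‖f b - f a‖ ≤ C * |b - a| := by
  rcases le_total a b with h | h
  · have H := norm_image_sub_le_of_norm_deriv_le_segment'
      (f := f) (f' := f') (a := a) (b := b)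
      (fun w _ => (hf w).hasDerivWithinAt)
      (fun w hw => hC w (by rw [Set.uIcc_of_le h]; exact Set.Ico_subset_Icc_self hw))
      b (Set.right_mem_Icc.2 h)
    rwa [abs_of_nonneg (sub_nonneg.2 h)]
  · have H := norm_image_sub_le_of_norm_deriv_le_segment'
      (f := f) (f' := f') (a := b) (b := a)
      (fun w _ => (hf w).hasDerivWithinAt)
      (fun w hw => hC w (by rw [Set.uIcc_of_ge h]; exact Set.Ico_subset_Icc_self hw))
      a (Set.right_mem_Icc.2 h)
    rw [abs_of_nonpos (sub_nonpos.2 h), norm_sub_rev]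
    linarith

lemma abs_rpow_mul_abs {t : ℝ} {γ : ℝ} (hγ : γ + 1 ≠ 0) : |t| ^ γ * |t| = |t| ^ (γ + 1) := by
  rcases eq_or_ne t 0 with rfl | ht
  · simp [Real.zero_rpow hγ]
  · rw [Real.rpow_add (abs_pos.2 ht), Real.rpow_one]

lemma inv_rpow_mul_rpow {z : ℝ} (hz : z ≠ 0) (s t : ℝ) :
    (|z| ^ s)⁻¹ * |z| ^ t = |z| ^ (t - s) := by
  rw [← Real.rpow_neg (abs_nonneg z), ← Real.rpow_add (abs_pos.2 hz)]
  congr 1; ring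

lemma measurable_abs_rpow (p : ℝ) : Measurable fun z : ℝ => |z| ^ p := by
  have : (fun z : ℝ => |z| ^ p)
      = fun z => if z = 0 then (0:ℝ) ^ p else Real.exp (Real.log |z| * p) := by
    funext z
    by_cases hz : z = 0
    · simp [hz]
    · rw [if_neg hz, Real.rpow_def_of_pos (abs_pos.2 hz)]
  rw [this]
  exact Measurable.ite (measurableSet_singleton 0) measurable_const
    ((Real.measurable_log.comp measurable_abs).mul measurable_const).exp

end helperLemmas

lemma near_int {p h : ℝ} (hp : -1 < p) (hh : 0 < h) :
    IntegrableOn (fun z : ℝ => |z| ^ p) (Icc (-h) h) volume ∧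
      ∫ z in Icc (-h) h, |z| ^ p = 2 * h ^ (p + 1) / (p + 1) := by
  have hp1 : p + 1 ≠ 0 := by intro hc; linarith
  have J1 : IntegrableOn (fun z : ℝ => z ^ p) (Icc (0:ℝ) h) :=
    (intervalIntegrable_iff_integrableOn_Icc_of_le hh.le).1 (intervalIntegral.intervalIntegrable_rpow' hp)
  have I1 : IntegrableOn (fun z : ℝ => |z| ^ p) (Icc (0:ℝ) h) :=
    J1.congr_fun (fun z hz => by rw [abs_of_nonneg hz.1]) measurableSet_Icc
  have I1' : IntervalIntegrable (fun z : ℝ => |z| ^ p) volume 0 h :=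
    (intervalIntegrable_iff_integrableOn_Icc_of_le hh.le).2 I1
  have I2' : IntervalIntegrable (fun z : ℝ => |z| ^ p) volume (-h) 0 := by
    have := (IntervalIntegrable.iff_comp_neg (by simp)).mp I1'
    simp only [abs_neg, neg_zero] at this
    exact this.symm
  have Iall : IntegrableOn (fun z : ℝ => |z| ^ p) (Icc (-h) h) :=
    (intervalIntegrable_iff_integrableOn_Icc_of_le (by linarith)).1 (I2'.trans I1')
  refine ⟨Iall, ?_⟩
  have e1 : ∫ z in (0:ℝ)..h, |z| ^ p = h ^ (p + 1) / (p + 1) := by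
    rw [intervalIntegral.integral_congr (g := fun z : ℝ => z ^ p)
      (fun z hz => by
        rw [Set.uIcc_of_le hh.le] at hz
        simp only
        rw [abs_of_nonneg hz.1])]
    rw [integral_rpow (Or.inl hp), Real.zero_rpow hp1, sub_zero]
  have e2 : ∫ z in (-h:ℝ)..0, |z| ^ p = h ^ (p + 1) / (p + 1) := by
    have := intervalIntegral.integral_comp_neg (a := -h) (b := 0) (fun z : ℝ => |z| ^ p)
    simp only [abs_neg, neg_zero, neg_neg] at this
    rw [this, e1]
  rw [integral_Icc_eq_integral_Ioc, ← intervalIntegral.integral_of_le (by linarith : -h ≤ h),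
    ← intervalIntegral.integral_add_adjacent_intervals I2' I1', e1, e2]
  ring

lemma far_int {q h : ℝ} (hq : q < -1) (hh : 0 < h) :
    IntegrableOn (fun z : ℝ => |z| ^ q) ((Icc (-h) h)ᶜ) volume ∧
      ∫ z in (Icc (-h) h)ᶜ, |z| ^ q = 2 * h ^ (q + 1) / (-(q + 1)) := by
  have hcompl : (Icc (-h) h)ᶜ = Iio (-h) ∪ Ioi h := by
    ext z
    simp only [mem_compl_iff, mem_Icc, not_and_or, not_le, mem_union, mem_Iio, mem_Ioi]
  have hIoi_int : IntegrableOn (fun z : ℝ => |z| ^ q) (Ioi h) :=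
    (integrableOn_Ioi_rpow_of_lt hq hh).congr_fun
      (fun z hz => by rw [abs_of_nonneg (hh.trans hz).le]) measurableSet_Ioi
  have hIoi_val : ∫ z in Ioi h, |z| ^ q = -h ^ (q + 1) / (q + 1) := by
    rw [setIntegral_congr_fun measurableSet_Ioi
      (fun z hz => by rw [abs_of_nonneg (hh.trans hz).le])]
    exact integral_Ioi_rpow_of_lt hq hh
  have hind : (fun x : ℝ => (Ioi h).indicator (fun z : ℝ => |z| ^ q) (-x))
      = (Iio (-h)).indicator (fun z : ℝ => |z| ^ q) := by
    funext x
    by_cases hx : x < -h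
    · rw [indicator_of_mem (by simpa using (by linarith : h < -x) : -x ∈ Ioi h),
        indicator_of_mem (by simpa using hx : x ∈ Iio (-h)), abs_neg]
    · rw [indicator_of_notMem (by simpa using (by linarith : ¬ h < -x)),
        indicator_of_notMem (by simpa using hx)]
  have hIio_int : IntegrableOn (fun z : ℝ => |z| ^ q) (Iio (-h)) := by
    have h1 : Integrable ((Ioi h).indicator (fun z : ℝ => |z| ^ q)) :=
      (integrable_indicator_iff measurableSet_Ioi).2 hIoi_int
    have h2 := h1.comp_neg
    rw [hind] at h2
    exact (integrable_indicator_iff measurableSet_Iio).1 h2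
  have hIio_val : ∫ z in Iio (-h), |z| ^ q = -h ^ (q + 1) / (q + 1) := by
    have h3 := integral_comp_neg_Iic (-h) (fun z : ℝ => |z| ^ q)
    simp only [abs_neg, neg_neg] at h3
    rw [← integral_Iic_eq_integral_Iio, h3, hIoi_val]
  have hdisj : Disjoint (Iio (-h)) (Ioi h) := by
    rw [Set.disjoint_left]
    intro z hz hz'
    simp only [mem_Iio] at hz
    simp only [mem_Ioi] at hz'
    linarith
  refine ⟨by rw [hcompl]; exact hIio_int.union hIoi_int, ?_⟩
  rw [hcompl, setIntegral_union hdisj measurableSet_Ioi hIio_int hIoi_int, hIio_val, hIoi_val,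
    div_neg]
  ring

variable {X : Type*} [NormedAddCommGroup X] [NormedSpace ℝ X]

lemma bound_master {f : ℝ → X} {h A B p q CA CB : ℝ} (hh : 0 < h) (hA : 0 ≤ A) (hB : 0 ≤ B)
    (hp : -1 < p) (hq : q < -1) (hm : AEStronglyMeasurable f volume)
    (hnear : ∀ z : ℝ, |z| ≤ h → ‖f z‖ ≤ A * |z| ^ p)
    (hfar : ∀ z : ℝ, h < |z| → ‖f z‖ ≤ B * |z| ^ q)
    (hCA : 2 * h ^ (p + 1) / (p + 1) ≤ CA) (hCB : 2 * h ^ (q + 1) / (-(q + 1)) ≤ CB) :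
    Integrable f volume ∧ ‖∫ z, f z‖ ≤ A * CA + B * CB := by
  obtain ⟨Inear, Enear⟩ := near_int hp hh
  obtain ⟨Ifar, Efar⟩ := far_int hq hh
  set g : ℝ → ℝ := fun z => if |z| ≤ h then A * |z| ^ p else B * |z| ^ q with hgdef
  have hmem : ∀ z : ℝ, z ∈ Icc (-h) h ↔ |z| ≤ h := fun z => by rw [mem_Icc, ← abs_le]
  have hgmeas : Measurable g := by
    refine Measurable.ite ?_ ((measurable_abs_rpow p).const_mul A)
      ((measurable_abs_rpow q).const_mul B)
    exact measurable_abs measurableSet_Iic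
  have hg_near : ∀ z ∈ Icc (-h) h, A * |z| ^ p = g z :=
    fun z hz => (if_pos ((hmem z).1 hz)).symm
  have hg_far : ∀ z ∈ (Icc (-h) h)ᶜ, B * |z| ^ q = g z :=
    fun z hz => (if_neg (fun hc => hz ((hmem z).2 hc))).symm
  have hgint : Integrable g := by
    rw [← integrableOn_univ, ← union_compl_self (Icc (-h) h)]
    exact (IntegrableOn.congr_fun (Inear.const_mul A) hg_near measurableSet_Icc).union
      (IntegrableOn.congr_fun (Ifar.const_mul B) hg_far measurableSet_Icc.compl)
  have hfg : ∀ z, ‖f z‖ ≤ g z := by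
    intro z
    by_cases hz : |z| ≤ h
    · rw [hgdef]; simp only [if_pos hz]; exact hnear z hz
    · rw [hgdef]; simp only [if_neg hz]; exact hfar z (not_le.1 hz)
  have hfint : Integrable f := hgint.mono' hm (Filter.Eventually.of_forall hfg)
  refine ⟨hfint, ?_⟩
  have hAn : 0 ≤ 2 * h ^ (p + 1) / (p + 1) := by
    have : 0 < p + 1 := by linarith
    positivity
  have hBn : 0 ≤ 2 * h ^ (q + 1) / (-(q + 1)) := by
    have : 0 < -(q + 1) := by linarith
    positivity
  calc ‖∫ z, f z‖ ≤ ∫ z, g z :=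
        norm_integral_le_of_norm_le hgint (Filter.Eventually.of_forall hfg)
    _ = (∫ z in Icc (-h) h, g z) + ∫ z in (Icc (-h) h)ᶜ, g z :=
        (integral_add_compl measurableSet_Icc hgint).symm
    _ = A * (2 * h ^ (p + 1) / (p + 1)) + B * (2 * h ^ (q + 1) / (-(q + 1))) := by
        rw [← setIntegral_congr_fun measurableSet_Icc hg_near,
          ← setIntegral_congr_fun measurableSet_Icc.compl hg_far,
          integral_const_mul, integral_const_mul, Enear, Efar]
    _ ≤ A * CA + B * CB := by
        have h1 : A * (2 * h ^ (p + 1) / (p + 1)) ≤ A * CA :=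
          mul_le_mul_of_nonneg_left hCA hA
        have h2 : B * (2 * h ^ (q + 1) / (-(q + 1))) ≤ B * CB :=
          mul_le_mul_of_nonneg_left hCB hB
        linarith

section est2
variable {X : Type} [NormedAddCommGroup X] [NormedSpace ℝ X] {u : ℝ → X}

lemma est_second_deriv (hu' : ∀ w, HasDerivAt (deriv u) (deriv (deriv u) w) w)
    {H γ : ℝ} (hH0 : 0 ≤ H) (hγ : 0 < γ)
    (hH : ∀ s t : ℝ, ‖deriv (deriv u) s - deriv (deriv u) t‖ ≤ H * |s - t| ^ γ)
    (a b : ℝ) :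
    ‖deriv u a - deriv u b - (a - b) • deriv (deriv u) a‖ ≤ H * |a - b| ^ (γ + 1) := by
  rcases eq_or_ne a b with rfl | hab
  · simp [Real.zero_rpow (by positivity : γ + 1 ≠ 0)]
  have key : ∀ w ∈ Set.uIcc b a, ‖deriv (deriv u) w - deriv (deriv u) a‖ ≤ H * |a - b| ^ γ := by
    intro w hw
    refine (hH w a).trans (mul_le_mul_of_nonneg_left ?_ hH0)
    refine Real.rpow_le_rpow (abs_nonneg _) ?_ hγ.le
    calc |w - a| ≤ |b - a| := abs_sub_left_of_mem_uIcc (Set.uIcc_comm b a ▸ hw)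
      _ = |a - b| := abs_sub_comm _ _
  have hder : ∀ w, HasDerivAt (fun w => deriv u w - w • deriv (deriv u) a)
      (deriv (deriv u) w - deriv (deriv u) a) w := by
    intro w
    exact (hu' w).sub (by simpa using (hasDerivAt_id w).smul_const (deriv (deriv u) a))
  have hmvt := mvt_abs hder key
  have harr : deriv u a - a • deriv (deriv u) a - (deriv u b - b • deriv (deriv u) a)
      = deriv u a - deriv u b - (a - b) • deriv (deriv u) a := by
    rw [sub_smul]; abel
  rw [harr] at hmvt
  calc ‖deriv u a - deriv u b - (a - b) • deriv (deriv u) a‖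
      ≤ H * |a - b| ^ γ * |a - b| := hmvt
    _ = H * |a - b| ^ (γ + 1) := by
        rw [mul_assoc, abs_rpow_mul_abs (by positivity : γ + 1 ≠ 0)]

lemma est_second_deriv' (hu' : ∀ w, HasDerivAt (deriv u) (deriv (deriv u) w) w)
    {H γ : ℝ} (hH0 : 0 ≤ H) (hγ : 0 < γ)
    (hH : ∀ s t : ℝ, ‖deriv (deriv u) s - deriv (deriv u) t‖ ≤ H * |s - t| ^ γ)
    (y w : ℝ) :
    ‖deriv u w - deriv u y - (w - y) • deriv (deriv u) y‖ ≤ H * |w - y| ^ (γ + 1) := by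
  have h1 := est_second_deriv hu' hH0 hγ hH y w
  rw [abs_sub_comm y w] at h1
  refine le_trans (le_of_eq ?_) h1
  rw [← norm_neg]
  congr 1
  module

lemma est_taylor2 (hu : ∀ w, HasDerivAt u (deriv u w) w)
    (hu' : ∀ w, HasDerivAt (deriv u) (deriv (deriv u) w) w)
    {H γ : ℝ} (hH0 : 0 ≤ H) (hγ : 0 < γ)
    (hH : ∀ s t : ℝ, ‖deriv (deriv u) s - deriv (deriv u) t‖ ≤ H * |s - t| ^ γ)
    (y z : ℝ) :
    ‖u y - u (y - z) - z • deriv u y + (z ^ 2 / 2) • deriv (deriv u) y‖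
      ≤ H * |z| ^ (γ + 2) := by
  have hg : ∀ w, HasDerivAt
      (fun w => u w - w • deriv u y - ((w - y) ^ 2 / 2) • deriv (deriv u) y)
      (deriv u w - deriv u y - (w - y) • deriv (deriv u) y) w := by
    intro w
    have h1 : HasDerivAt (fun w : ℝ => (w - y) ^ 2 / 2) (w - y) w := by
      have h2 := (HasDerivAt.comp_sub_const (f := fun t : ℝ => t ^ 2)
        (f' := 2 * (w - y) ^ 1) w y (hasDerivAt_pow 2 (w - y))).div_const 2
      exact h2.congr_deriv (by ring)
    exact ((hu w).sub (by simpa using (hasDerivAt_id w).smul_const (deriv u y))).sub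
      (h1.smul_const (deriv (deriv u) y))
  have key : ∀ w ∈ Set.uIcc (y - z) y,
      ‖deriv u w - deriv u y - (w - y) • deriv (deriv u) y‖ ≤ H * |z| ^ (γ + 1) := by
    intro w hw
    refine (est_second_deriv' hu' hH0 hγ hH y w).trans (mul_le_mul_of_nonneg_left ?_ hH0)
    refine Real.rpow_le_rpow (abs_nonneg _) ?_ (by positivity)
    have := abs_sub_left_of_mem_uIcc (Set.uIcc_comm (y - z) y ▸ hw)
    simpa using this
  have hmvt := mvt_abs hg key
  have harr : (u y - y • deriv u y - ((y - y) ^ 2 / 2) • deriv (deriv u) y)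
      - (u (y - z) - (y - z) • deriv u y - ((y - z - y) ^ 2 / 2) • deriv (deriv u) y)
      = u y - u (y - z) - z • deriv u y + (z ^ 2 / 2) • deriv (deriv u) y := by
    module
  rw [harr] at hmvt
  have habs : |y - (y - z)| = |z| := by congr 1; ring
  rw [habs] at hmvt
  calc ‖u y - u (y - z) - z • deriv u y + (z ^ 2 / 2) • deriv (deriv u) y‖
      ≤ H * |z| ^ (γ + 1) * |z| := hmvt
    _ = H * |z| ^ (γ + 2) := by
        rw [mul_assoc, abs_rpow_mul_abs (by positivity : γ + 1 + 1 ≠ 0),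
          show γ + 1 + 1 = γ + 2 by ring]

lemma est_far (hu : ∀ w, HasDerivAt u (deriv u w) w)
    (hu' : ∀ w, HasDerivAt (deriv u) (deriv (deriv u) w) w)
    {H γ : ℝ} (hH0 : 0 ≤ H) (hγ : 0 < γ)
    (hH : ∀ s t : ℝ, ‖deriv (deriv u) s - deriv (deriv u) t‖ ≤ H * |s - t| ^ γ)
    (x x' z : ℝ) :
    ‖(u x - u (x - z) - z • deriv u x) - (u x' - u (x' - z) - z • deriv u x')‖
      ≤ H * |z| ^ (γ + 1) * |x - x'| := by
  have hv : ∀ w, HasDerivAt (fun w => u w - u (w - z) - z • deriv u w)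
      (deriv u w - deriv u (w - z) - z • deriv (deriv u) w) w := by
    intro w
    exact ((hu w).sub (HasDerivAt.comp_sub_const w z (hu (w - z)))).sub ((hu' w).const_smul z)
  have key : ∀ w ∈ Set.uIcc x' x,
      ‖deriv u w - deriv u (w - z) - z • deriv (deriv u) w‖ ≤ H * |z| ^ (γ + 1) := by
    intro w _
    have := est_second_deriv hu' hH0 hγ hH w (w - z)
    simpa using this
  exact mvt_abs hv key

lemma est_bounded (hu : ∀ w, HasDerivAt u (deriv u w) w)
    (hu' : ∀ w, HasDerivAt (deriv u) (deriv (deriv u) w) w)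
    {M2 : ℝ} (hM2 : ∀ w, ‖deriv (deriv u) w‖ ≤ M2) (x y : ℝ) :
    ‖u x - u y - (x - y) • deriv u x‖ ≤ M2 * |x - y| * |x - y| := by
  have hM2n : 0 ≤ M2 := le_trans (norm_nonneg _) (hM2 0)
  have key : ∀ w ∈ Set.uIcc y x, ‖deriv u w - deriv u x‖ ≤ M2 * |x - y| := by
    intro w hw
    have h1 := mvt_abs (f := deriv u) (f' := deriv (deriv u)) hu'
      (a := x) (b := w) (C := M2) (fun v _ => hM2 v)
    refine h1.trans (mul_le_mul_of_nonneg_left ?_ hM2n)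
    calc |w - x| ≤ |y - x| := abs_sub_left_of_mem_uIcc (Set.uIcc_comm y x ▸ hw)
      _ = |x - y| := abs_sub_comm _ _
  have hder : ∀ w, HasDerivAt (fun w => u w - w • deriv u x)
      (deriv u w - deriv u x) w :=
    fun w => (hu w).sub (by simpa using (hasDerivAt_id w).smul_const (deriv u x))
  have hmvt := mvt_abs hder key
  refine le_trans (le_of_eq ?_) hmvt
  congr 1
  module

end est2

/-! ### The main theorem -/

set_option maxHeartbeats 2000000
/-- Hölder boundedness of the fractional Laplacian: for `α ∈ (1,2)`, `β ∈ (0,1)` with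
`α + β ∈ (2,3)`, there is `C = C(α,β) > 0`, independent of the Banach space `X`
and of `u`, such that for every bounded `C²` function `u : ℝ → X` with bounded
derivatives and finite seminorm `[D²u]_{α+β−2}`, the defining Bochner integral of
`(−Δ)^{α/2}u(x)` converges absolutely for every `x`, and
`‖(−Δ)^{α/2}u‖_∞ + [(−Δ)^{α/2}u]_β ≤ C ‖u‖_{α+β}`. -/
theorem fracLap_holder_bound (α β : ℝ) (hα : 1 < α) (hα2 : α < 2)
    (hβ : 0 < β) (hβ1 : β < 1) (hab : 2 < α + β) (hab2 : α + β < 3) :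
    ∃ C : ℝ, 0 < C ∧
      ∀ (X : Type) [NormedAddCommGroup X] [NormedSpace ℝ X] [CompleteSpace X],
        ∀ u : ℝ → X,
          (∃ B : ℝ, ∀ x : ℝ, ‖u x‖ ≤ B) →
          ContDiff ℝ 2 u →
          (∃ B : ℝ, ∀ x : ℝ, ‖deriv u x‖ ≤ B) →
          (∃ B : ℝ, ∀ x : ℝ, ‖iteratedDeriv 2 u x‖ ≤ B) →
          (∃ B : ℝ, ∀ x y : ℝ, x ≠ y →
            ‖iteratedDeriv 2 u x - iteratedDeriv 2 u y‖ ≤ B * |x - y| ^ (α + β - 2)) →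
          (∀ x : ℝ, Integrable
              (fun y : ℝ => (|x - y| ^ (1 + α))⁻¹ • (u x - u y - (x - y) • deriv u x))) ∧
          supNorm (fracLap α u) + holderSemi β (fracLap α u) ≤
            C * (supNorm u + supNorm (deriv u) + supNorm (iteratedDeriv 2 u)
              + holderSemi β u + holderSemi β (deriv u)
              + holderSemi (α + β - 2) (iteratedDeriv 2 u)) := by
  have h2α : (0:ℝ) < 2 - α := by linarith
  have hα1 : (0:ℝ) < α - 1 := by linarith
  have h1β : (0:ℝ) < 1 - β := by linarith
  have hγpos : (0:ℝ) < α + β - 2 := by linarith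
  have h1α : (0:ℝ) < 1 + α := by linarith
  have hpnear : (-1:ℝ) < 1 - α := by linarith
  have hqfar : (-α:ℝ) < -1 := by linarith
  have hqhol : β - 2 < (-1:ℝ) := by linarith
  set c1 : ℝ := |Calpha α| * (2 / (2 - α)) with hc1def
  set c2 : ℝ := |Calpha α| * (2 / (α - 1)) with hc2def
  set K2 : ℝ := |Calpha α| * (5 / (2 - α) + 2 / (1 - β)) with hK2def
  have hc1n : 0 ≤ c1 := by rw [hc1def]; positivity
  have hc2n : 0 ≤ c2 := by rw [hc2def]; positivity
  have hK2n : 0 ≤ K2 := by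
    rw [hK2def]
    have h5 : (0:ℝ) ≤ 5 / (2 - α) + 2 / (1 - β) := by positivity
    positivity
  refine ⟨c1 + 3 * c2 + K2 + 1, by linarith, ?_⟩
  intro X _ _ _ u hbd0 hC2 hbd1 hbd2 hbd3
  -- derivative facts
  have hdiff : Differentiable ℝ u := hC2.differentiable (by norm_num)
  have h21 : (2 : WithTop ℕ∞) = 1 + 1 := by norm_num
  rw [h21] at hC2
  have hdd1 : ContDiff ℝ 1 (deriv u) := (contDiff_succ_iff_deriv.mp hC2).2.2
  have hdiff1 : Differentiable ℝ (deriv u) := hdd1.differentiable one_ne_zero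
  have hdu : ∀ w, HasDerivAt u (deriv u w) w := fun w => (hdiff w).hasDerivAt
  have hdu' : ∀ w, HasDerivAt (deriv u) (deriv (deriv u) w) w := fun w => (hdiff1 w).hasDerivAt
  have hiter : iteratedDeriv 2 u = deriv (deriv u) := by
    rw [show (2:ℕ) = 1 + 1 from rfl, iteratedDeriv_succ, iteratedDeriv_one]
  rw [hiter] at hbd2 hbd3 ⊢
  obtain ⟨B0, hB0⟩ := hbd0
  obtain ⟨B1, hB1⟩ := hbd1
  obtain ⟨B2, hB2⟩ := hbd2
  obtain ⟨B3, hB3⟩ := hbd3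
  haveI : Nonempty {q : ℝ × ℝ // q.1 ≠ q.2} := ⟨⟨(0, 1), by norm_num⟩⟩
  have hM0 : ∀ x, ‖u x‖ ≤ supNorm u := fun x =>
    le_ciSup ⟨B0, by rintro _ ⟨y, rfl⟩; exact hB0 y⟩ x
  have hM1 : ∀ x, ‖deriv u x‖ ≤ supNorm (deriv u) := fun x =>
    le_ciSup ⟨B1, by rintro _ ⟨y, rfl⟩; exact hB1 y⟩ x
  have hM2 : ∀ x, ‖deriv (deriv u) x‖ ≤ supNorm (deriv (deriv u)) := fun x =>
    le_ciSup ⟨B2, by rintro _ ⟨y, rfl⟩; exact hB2 y⟩ x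
  set M0 := supNorm u with hM0def
  set M1 := supNorm (deriv u) with hM1def
  set M2 := supNorm (deriv (deriv u)) with hM2def
  set H := holderSemi (α + β - 2) (deriv (deriv u)) with hHdef
  have hM0n : 0 ≤ M0 := Real.iSup_nonneg fun _ => norm_nonneg _
  have hM1n : 0 ≤ M1 := Real.iSup_nonneg fun _ => norm_nonneg _
  have hM2n : 0 ≤ M2 := Real.iSup_nonneg fun _ => norm_nonneg _
  have hHn : 0 ≤ H := Real.iSup_nonneg fun p =>
    div_nonneg (norm_nonneg _) (Real.rpow_nonneg (abs_nonneg _) _)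
  have hhun : 0 ≤ holderSemi β u := Real.iSup_nonneg fun p =>
    div_nonneg (norm_nonneg _) (Real.rpow_nonneg (abs_nonneg _) _)
  have hhu1n : 0 ≤ holderSemi β (deriv u) := Real.iSup_nonneg fun p =>
    div_nonneg (norm_nonneg _) (Real.rpow_nonneg (abs_nonneg _) _)
  have hHpt : ∀ s t : ℝ, ‖deriv (deriv u) s - deriv (deriv u) t‖
      ≤ H * |s - t| ^ (α + β - 2) := by
    intro s t
    rcases eq_or_ne s t with rfl | hst
    · simp [Real.zero_rpow (by linarith : α + β - 2 ≠ 0)]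
    · have hd : (0:ℝ) < |s - t| ^ (α + β - 2) :=
        Real.rpow_pos_of_pos (abs_pos.2 (sub_ne_zero.2 hst)) _
      have hq : ‖deriv (deriv u) s - deriv (deriv u) t‖ / |s - t| ^ (α + β - 2) ≤ H := by
        refine le_ciSup (f := fun p : {q : ℝ × ℝ // q.1 ≠ q.2} =>
          ‖deriv (deriv u) p.val.1 - deriv (deriv u) p.val.2‖
            / |p.val.1 - p.val.2| ^ (α + β - 2)) ?_ ⟨(s, t), hst⟩
        refine ⟨B3, ?_⟩
        rintro _ ⟨⟨⟨s', t'⟩, hp⟩, rfl⟩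
        exact (div_le_iff₀ (Real.rpow_pos_of_pos (abs_pos.2 (sub_ne_zero.2 hp)) _)).2
          (hB3 s' t' hp)
      exact (div_le_iff₀ hd).1 hq
  -- measurability
  have hFmeas : ∀ x : ℝ, StronglyMeasurable
      (fun y : ℝ => (|x - y| ^ (1 + α))⁻¹ • (u x - u y - (x - y) • deriv u x)) := by
    intro x
    have hker : Measurable fun y : ℝ => (|x - y| ^ (1 + α))⁻¹ :=
      (((Real.continuous_rpow_const h1α.le).comp
        ((continuous_const.sub continuous_id).abs)).measurable).inv
    have hcv : Continuous fun y : ℝ => u x - u y - (x - y) • deriv u x :=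
      (continuous_const.sub hC2.continuous).sub
        ((continuous_const.sub continuous_id).smul continuous_const)
    exact hker.stronglyMeasurable.smul hcv.stronglyMeasurable
  set g : ℝ → ℝ → X := fun x z =>
    (|z| ^ (1 + α))⁻¹ • (u x - u (x - z) - z • deriv u x) with hgdef
  have hshift : ∀ x : ℝ,
      (fun z : ℝ => (|x - (x - z)| ^ (1 + α))⁻¹
        • (u x - u (x - z) - (x - (x - z)) • deriv u x)) = g x := by
    intro x; funext z; rw [hgdef]; simp [sub_sub_cancel]
  have hgsm : ∀ x : ℝ, StronglyMeasurable (g x) := by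
    intro x
    have h1 : StronglyMeasurable fun z : ℝ =>
        (|x - (x - z)| ^ (1 + α))⁻¹ • (u x - u (x - z) - (x - (x - z)) • deriv u x) :=
      (hFmeas x).comp_measurable (measurable_const.sub measurable_id)
    rwa [hshift x] at h1
  have hnormg : ∀ x z : ℝ, ‖g x z‖
      = (|z| ^ (1 + α))⁻¹ * ‖u x - u (x - z) - z • deriv u x‖ := by
    intro x z
    rw [hgdef]
    rw [norm_smul, Real.norm_eq_abs,
      abs_of_nonneg (inv_nonneg.2 (Real.rpow_nonneg (abs_nonneg _) _))]
  have hgzero : ∀ x : ℝ, g x 0 = 0 := by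
    intro x
    rw [hgdef]
    simp [Real.zero_rpow (ne_of_gt h1α)]
  have hkn : ∀ z : ℝ, 0 ≤ (|z| ^ (1 + α))⁻¹ :=
    fun z => inv_nonneg.2 (Real.rpow_nonneg (abs_nonneg _) _)
  have ker_reduce : ∀ {z : ℝ}, z ≠ 0 → ∀ A : ℝ,
      (|z| ^ (1 + α))⁻¹ * (A * (|z| * |z|)) = A * |z| ^ (1 - α) := by
    intro z hz A
    rw [show A * (|z| * |z|) = A * (|z| ^ (1:ℝ) * |z|) by rw [Real.rpow_one],
      abs_rpow_mul_abs (by norm_num : (1:ℝ) + 1 ≠ 0), mul_left_comm,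
      inv_rpow_mul_rpow hz, show (1:ℝ) + 1 - (1 + α) = 1 - α by ring]
  -- near bound, radius 1
  have hnear1 : ∀ x z : ℝ, |z| ≤ 1 → ‖g x z‖ ≤ M2 * |z| ^ (1 - α) := by
    intro x z _
    rcases eq_or_ne z 0 with rfl | hz0
    · rw [hgzero x]
      simp [Real.zero_rpow (by linarith : 1 - α ≠ 0)]
    · have hb := est_bounded hdu hdu' hM2 x (x - z)
      rw [show x - (x - z) = z by ring] at hb
      rw [hnormg]
      calc (|z| ^ (1 + α))⁻¹ * ‖u x - u (x - z) - z • deriv u x‖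
          ≤ (|z| ^ (1 + α))⁻¹ * (M2 * (|z| * |z|)) := by
            refine mul_le_mul_of_nonneg_left ?_ (hkn z)
            rw [← mul_assoc]; exact hb
        _ = M2 * |z| ^ (1 - α) := ker_reduce hz0 M2
  -- far bound, radius 1
  have hfar1 : ∀ x z : ℝ, (1:ℝ) < |z| → ‖g x z‖ ≤ (2 * M0 + M1) * |z| ^ (-α) := by
    intro x z hz1
    have hz0 : z ≠ 0 := by
      intro hc; rw [hc, abs_zero] at hz1; linarith
    rw [hnormg]
    have hΦ : ‖u x - u (x - z) - z • deriv u x‖ ≤ 2 * M0 + M1 * |z| := by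
      calc ‖u x - u (x - z) - z • deriv u x‖
          ≤ ‖u x - u (x - z)‖ + ‖z • deriv u x‖ := norm_sub_le _ _
        _ ≤ ‖u x‖ + ‖u (x - z)‖ + |z| * ‖deriv u x‖ := by
            rw [norm_smul, Real.norm_eq_abs]
            have := norm_sub_le (u x) (u (x - z))
            linarith
        _ ≤ M0 + M0 + |z| * M1 := by
            have h3 : |z| * ‖deriv u x‖ ≤ |z| * M1 :=
              mul_le_mul_of_nonneg_left (hM1 x) (abs_nonneg z)
            have := hM0 x
            have := hM0 (x - z)
            linarith
        _ = 2 * M0 + M1 * |z| := by ring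
    have e0 : (|z| ^ (1 + α))⁻¹ ≤ |z| ^ (-α) := by
      rw [← Real.rpow_neg (abs_nonneg z)]
      exact Real.rpow_le_rpow_of_exponent_le hz1.le (by linarith)
    have e1 : (|z| ^ (1 + α))⁻¹ * |z| = |z| ^ (-α) := by
      have h4 := inv_rpow_mul_rpow hz0 (1 + α) 1
      rw [Real.rpow_one] at h4
      rw [h4, show (1:ℝ) - (1 + α) = -α by ring]
    calc (|z| ^ (1 + α))⁻¹ * ‖u x - u (x - z) - z • deriv u x‖
        ≤ (|z| ^ (1 + α))⁻¹ * (2 * M0 + M1 * |z|) := mul_le_mul_of_nonneg_left hΦ (hkn z)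
      _ = 2 * M0 * (|z| ^ (1 + α))⁻¹ + M1 * ((|z| ^ (1 + α))⁻¹ * |z|) := by ring
      _ ≤ 2 * M0 * |z| ^ (-α) + M1 * |z| ^ (-α) := by
          rw [e1]
          have h5 := mul_le_mul_of_nonneg_left e0 (by linarith : (0:ℝ) ≤ 2 * M0)
          linarith
      _ = (2 * M0 + M1) * |z| ^ (-α) := by ring
  -- master bound at scale 1
  have hmain : ∀ x : ℝ, Integrable (g x) ∧
      ‖∫ z, g x z‖ ≤ M2 * (2 / (2 - α)) + (2 * M0 + M1) * (2 / (α - 1)) := by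
    intro x
    refine bound_master one_pos hM2n (by linarith) hpnear hqfar
      (hgsm x).aestronglyMeasurable (hnear1 x) (hfar1 x) ?_ ?_
    · rw [show (1:ℝ) - α + 1 = 2 - α by ring, Real.one_rpow, mul_one]
    · rw [show -(-α + 1) = α - 1 by ring, Real.one_rpow, mul_one]
  -- integrability of the original integrand
  have hintF : ∀ x : ℝ, Integrable
      (fun y : ℝ => (|x - y| ^ (1 + α))⁻¹ • (u x - u y - (x - y) • deriv u x)) := by
    intro x
    have h1 := (hmain x).1
    rw [← hshift x] at h1
    exact (integrable_comp_sub_left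
      (fun y : ℝ => (|x - y| ^ (1 + α))⁻¹ • (u x - u y - (x - y) • deriv u x)) x).1 h1
  have hIeq : ∀ x : ℝ, (∫ z, g x z)
      = ∫ y : ℝ, (|x - y| ^ (1 + α))⁻¹ • (u x - u y - (x - y) • deriv u x) := by
    intro x
    rw [← hshift x]
    exact integral_sub_left_eq_self
      (fun y : ℝ => (|x - y| ^ (1 + α))⁻¹ • (u x - u y - (x - y) • deriv u x)) volume x
  -- sup bound
  have hsup : ∀ x : ℝ, ‖fracLap α u x‖ ≤ c1 * M2 + 2 * c2 * M0 + c2 * M1 := by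
    intro x
    have h2 := (hmain x).2
    have hF : fracLap α u x = Calpha α • ∫ z, g x z := by
      unfold fracLap
      rw [hIeq x]
    rw [hF, norm_smul, Real.norm_eq_abs]
    calc |Calpha α| * ‖∫ z, g x z‖
        ≤ |Calpha α| * (M2 * (2 / (2 - α)) + (2 * M0 + M1) * (2 / (α - 1))) :=
          mul_le_mul_of_nonneg_left h2 (abs_nonneg _)
      _ = c1 * M2 + 2 * c2 * M0 + c2 * M1 := by rw [hc1def, hc2def]; ring
  -- Hölder bound
  have hhol : ∀ x x' : ℝ, x ≠ x' →
      ‖fracLap α u x - fracLap α u x'‖ ≤ K2 * H * |x - x'| ^ β := by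
    intro x x' hne
    set h := |x - x'| with hhdef
    have hpos : 0 < h := abs_pos.2 (sub_ne_zero.2 hne)
    have hGsm : AEStronglyMeasurable (fun z => g x z - g x' z) volume :=
      ((hgsm x).sub (hgsm x')).aestronglyMeasurable
    have hsub : ∀ z : ℝ, g x z - g x' z = (|z| ^ (1 + α))⁻¹ •
        ((u x - u (x - z) - z • deriv u x) - (u x' - u (x' - z) - z • deriv u x')) := by
      intro z
      rw [hgdef, smul_sub]
    have hDnear : ∀ z : ℝ, |z| ≤ h → ‖g x z - g x' z‖
        ≤ (5 / 2 * (H * h ^ (α + β - 2))) * |z| ^ (1 - α) := by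
      intro z hzh
      rcases eq_or_ne z 0 with rfl | hz0
      · rw [hgzero x, hgzero x', sub_zero]
        simp [Real.zero_rpow (by linarith : 1 - α ≠ 0)]
      · have hP := est_taylor2 hdu hdu' hHn hγpos hHpt x z
        have hP' := est_taylor2 hdu hdu' hHn hγpos hHpt x' z
        have hdd := hHpt x x'
        rw [← hhdef] at hdd
        have hdec : (u x - u (x - z) - z • deriv u x) - (u x' - u (x' - z) - z • deriv u x')
            = (u x - u (x - z) - z • deriv u x + (z ^ 2 / 2) • deriv (deriv u) x)
              - (u x' - u (x' - z) - z • deriv u x' + (z ^ 2 / 2) • deriv (deriv u) x')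
              - (z ^ 2 / 2) • (deriv (deriv u) x - deriv (deriv u) x') := by
          module
        have hzz : |z| ^ (α + β - 2 + 2) ≤ h ^ (α + β - 2) * (|z| * |z|) := by
          have e : |z| ^ (α + β - 2 + 2) = |z| ^ (α + β - 2) * (|z| * |z|) := by
            rw [show α + β - 2 + 2 = α + β - 2 + 1 + 1 by ring,
              ← abs_rpow_mul_abs (by linarith : α + β - 2 + 1 + 1 ≠ 0),
              ← abs_rpow_mul_abs (by linarith : α + β - 2 + 1 ≠ 0), mul_assoc]
          rw [e]
          exact mul_le_mul_of_nonneg_right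
            (Real.rpow_le_rpow (abs_nonneg _) hzh hγpos.le) (by positivity)
        have hQ : ‖(z ^ 2 / 2) • (deriv (deriv u) x - deriv (deriv u) x')‖
            ≤ z ^ 2 / 2 * (H * h ^ (α + β - 2)) := by
          rw [norm_smul, Real.norm_eq_abs, abs_of_nonneg (by positivity : (0:ℝ) ≤ z ^ 2 / 2)]
          exact mul_le_mul_of_nonneg_left hdd (by positivity)
        have hDbound : ‖(u x - u (x - z) - z • deriv u x)
            - (u x' - u (x' - z) - z • deriv u x')‖
            ≤ 5 / 2 * (H * h ^ (α + β - 2)) * (|z| * |z|) := by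
          rw [hdec]
          have hP2 : ‖u x - u (x - z) - z • deriv u x + (z ^ 2 / 2) • deriv (deriv u) x‖
              ≤ H * (h ^ (α + β - 2) * (|z| * |z|)) :=
            hP.trans (mul_le_mul_of_nonneg_left hzz hHn)
          have hP2' : ‖u x' - u (x' - z) - z • deriv u x' + (z ^ 2 / 2) • deriv (deriv u) x'‖
              ≤ H * (h ^ (α + β - 2) * (|z| * |z|)) :=
            hP'.trans (mul_le_mul_of_nonneg_left hzz hHn)
          calc ‖(u x - u (x - z) - z • deriv u x + (z ^ 2 / 2) • deriv (deriv u) x)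
              - (u x' - u (x' - z) - z • deriv u x' + (z ^ 2 / 2) • deriv (deriv u) x')
              - (z ^ 2 / 2) • (deriv (deriv u) x - deriv (deriv u) x')‖
              ≤ ‖(u x - u (x - z) - z • deriv u x + (z ^ 2 / 2) • deriv (deriv u) x)
                - (u x' - u (x' - z) - z • deriv u x' + (z ^ 2 / 2) • deriv (deriv u) x')‖
                + ‖(z ^ 2 / 2) • (deriv (deriv u) x - deriv (deriv u) x')‖ := norm_sub_le _ _
            _ ≤ (H * (h ^ (α + β - 2) * (|z| * |z|)) + H * (h ^ (α + β - 2) * (|z| * |z|)))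
                + z ^ 2 / 2 * (H * h ^ (α + β - 2)) := by
                have := (norm_sub_le _ _).trans (add_le_add hP2 hP2')
                linarith [hQ, this]
            _ = 5 / 2 * (H * h ^ (α + β - 2)) * (|z| * |z|) := by
                rw [show z ^ 2 = |z| * |z| by rw [sq, ← abs_mul_abs_self]]
                ring
        rw [hsub z, norm_smul, Real.norm_eq_abs,
          abs_of_nonneg (inv_nonneg.2 (Real.rpow_nonneg (abs_nonneg _) _))]
        calc (|z| ^ (1 + α))⁻¹ * ‖(u x - u (x - z) - z • deriv u x)
            - (u x' - u (x' - z) - z • deriv u x')‖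
            ≤ (|z| ^ (1 + α))⁻¹ * (5 / 2 * (H * h ^ (α + β - 2)) * (|z| * |z|)) :=
              mul_le_mul_of_nonneg_left hDbound (hkn z)
          _ = (5 / 2 * (H * h ^ (α + β - 2))) * |z| ^ (1 - α) := ker_reduce hz0 _
    have hDfar : ∀ z : ℝ, h < |z| → ‖g x z - g x' z‖ ≤ (H * h) * |z| ^ (β - 2) := by
      intro z hz
      have hz0 : z ≠ 0 := by
        intro hc; rw [hc, abs_zero] at hz; linarith
      have hD := est_far hdu hdu' hHn hγpos hHpt x x' z
      rw [← hhdef] at hD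
      rw [hsub z, norm_smul, Real.norm_eq_abs,
        abs_of_nonneg (inv_nonneg.2 (Real.rpow_nonneg (abs_nonneg _) _))]
      calc (|z| ^ (1 + α))⁻¹ * ‖(u x - u (x - z) - z • deriv u x)
          - (u x' - u (x' - z) - z • deriv u x')‖
          ≤ (|z| ^ (1 + α))⁻¹ * (H * |z| ^ (α + β - 2 + 1) * h) :=
            mul_le_mul_of_nonneg_left hD (hkn z)
        _ = (H * h) * |z| ^ (β - 2) := by
            rw [show H * |z| ^ (α + β - 2 + 1) * h = H * h * |z| ^ (α + β - 2 + 1) by ring,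
              mul_left_comm, inv_rpow_mul_rpow hz0,
              show α + β - 2 + 1 - (1 + α) = β - 2 by ring]
    have hA : (0:ℝ) ≤ 5 / 2 * (H * h ^ (α + β - 2)) := by positivity
    have hB : (0:ℝ) ≤ H * h := by positivity
    have hBM := bound_master hpos hA hB hpnear hqhol hGsm hDnear hDfar
      (le_of_eq (by rw [show (1:ℝ) - α + 1 = 2 - α by ring]) :
        2 * h ^ (1 - α + 1) / (1 - α + 1) ≤ 2 * h ^ (2 - α) / (2 - α))
      (le_of_eq (by rw [show β - 2 + 1 = β - 1 by ring, show -(β - 1) = 1 - β by ring]) :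
        2 * h ^ (β - 2 + 1) / (-(β - 2 + 1)) ≤ 2 * h ^ (β - 1) / (1 - β))
    have hFdiff : fracLap α u x - fracLap α u x' = Calpha α • ∫ z, (g x z - g x' z) := by
      unfold fracLap
      rw [← hIeq x, ← hIeq x', ← smul_sub, integral_sub (hmain x).1 (hmain x').1]
    rw [hFdiff, norm_smul, Real.norm_eq_abs]
    have e1 : h ^ (α + β - 2) * h ^ (2 - α) = h ^ β := by
      rw [← Real.rpow_add hpos]; congr 1; ring
    have e2 : h * h ^ (β - 1) = h ^ β := by
      nth_rewrite 1 [← Real.rpow_one h]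
      rw [← Real.rpow_add hpos]; congr 1; ring
    calc |Calpha α| * ‖∫ z, (g x z - g x' z)‖
        ≤ |Calpha α| * ((5 / 2 * (H * h ^ (α + β - 2))) * (2 * h ^ (2 - α) / (2 - α))
            + (H * h) * (2 * h ^ (β - 1) / (1 - β))) :=
          mul_le_mul_of_nonneg_left hBM.2 (abs_nonneg _)
      _ = K2 * H * h ^ β := by
          rw [hK2def]
          linear_combination (|Calpha α| * 5 / (2 - α) * H) * e1
            + (|Calpha α| * 2 / (1 - β) * H) * e2
  -- assemble
  refine ⟨hintF, ?_⟩
  have hS1 : supNorm (fracLap α u) ≤ c1 * M2 + 2 * c2 * M0 + c2 * M1 := ciSup_le hsup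
  have hS2 : holderSemi β (fracLap α u) ≤ K2 * H := by
    refine ciSup_le ?_
    rintro ⟨⟨x, x'⟩, hne⟩
    rw [div_le_iff₀ (Real.rpow_pos_of_pos (abs_pos.2 (sub_ne_zero.2 hne)) β)]
    exact hhol x x' hne
  set N := M0 + M1 + M2 + holderSemi β u + holderSemi β (deriv u) + H with hNdef
  have hNn : 0 ≤ N := by rw [hNdef]; linarith
  have hM0N : M0 ≤ N := by rw [hNdef]; linarith
  have hM1N : M1 ≤ N := by rw [hNdef]; linarith
  have hM2N : M2 ≤ N := by rw [hNdef]; linarith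
  have hHN : H ≤ N := by rw [hNdef]; linarith
  have t1 : c1 * M2 ≤ c1 * N := mul_le_mul_of_nonneg_left hM2N hc1n
  have t2 : 2 * c2 * M0 ≤ 2 * c2 * N := mul_le_mul_of_nonneg_left hM0N (by linarith)
  have t3 : c2 * M1 ≤ c2 * N := mul_le_mul_of_nonneg_left hM1N hc2n
  have t4 : K2 * H ≤ K2 * N := mul_le_mul_of_nonneg_left hHN hK2n
  calc supNorm (fracLap α u) + holderSemi β (fracLap α u)
      ≤ (c1 * M2 + 2 * c2 * M0 + c2 * M1) + K2 * H := add_le_add hS1 hS2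
    _ ≤ (c1 + 3 * c2 + K2 + 1) * N := by nlinarith [hNn]
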